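/- If (g, [·,·], α) is a Hom-Lie algebra, then for every n ≥ 0 the triple (g, [·,·]^{(n)} := α^n ∘ [·,·], α^{n+1}) is a Hom-Lie algebra (the n-th derived Hom-Lie algebra). -/
import Mathlib


/-- A bilinear map, as a predicate on plain two-argument functions. -/
def IsBilin (K : Type*) {M N P : Type*} [Field K] [AddCommGroup M] [Module K M]
    [AddCommGroup N] [Module K N] [AddCommGroup P] [Module K P]
    (b : M → N → P) : Prop :=
  (∀ x, IsLinearMap K (b x)) ∧ (∀ y, IsLinearMap K fun x => b x y)

/-- A Hom-Lie algebra structure: bilinear skew-symmetric bracket `b` and a linear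
twisting map `α` satisfying multiplicativity and the Hom-Jacobi identity. -/
def IsHomLie (K : Type*) {g : Type*} [Field K] [AddCommGroup g] [Module K g]
    (b : g → g → g) (α : g → g) : Prop :=
  IsBilin K b ∧ IsLinearMap K α ∧
  (∀ x y, b x y = - b y x) ∧
  (∀ x y, α (b x y) = b (α x) (α y)) ∧
  (∀ x y z, b (b x y) (α z) + b (b y z) (α x) + b (b z x) (α y) = 0)

/-- A compatible Hom-Lie algebra: both brackets and every linear combination of
them are Hom-Lie brackets with the same twisting map `α`. -/
def IsCompatHomLie (K : Type*) {g : Type*} [Field K] [AddCommGroup g] [Module K g]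
    (b₁ b₂ : g → g → g) (α : g → g) : Prop :=
  IsHomLie K b₁ α ∧ IsHomLie K b₂ α ∧
  ∀ l m : K, IsHomLie K (fun x y => l • b₁ x y + m • b₂ x y) α

/-- The `n`-th derived Hom-Lie algebra `(g, αⁿ∘b, αⁿ⁺¹)` of a Hom-Lie algebra. -/
lemma iter_linear {K g : Type*} [Field K] [AddCommGroup g] [Module K g]
    {α : g → g} (hα : IsLinearMap K α) (n : ℕ) : IsLinearMap K (α^[n]) := by
  induction n with
  | zero => exact ⟨fun _ _ => rfl, fun _ _ => rfl⟩
  | succ n ih =>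
    refine ⟨fun x y => ?_, fun c x => ?_⟩ <;>
      simp [Function.iterate_succ_apply', ih.map_add, ih.map_smul, hα.map_add, hα.map_smul]

lemma iter_mult {K g : Type*} [Field K] [AddCommGroup g] [Module K g]
    {b : g → g → g} {α : g → g} (hm : ∀ x y, α (b x y) = b (α x) (α y)) (n : ℕ) :
    ∀ x y, α^[n] (b x y) = b (α^[n] x) (α^[n] y) := by
  induction n with
  | zero => intro x y; rfl
  | succ n ih =>
    intro x y
    simp [Function.iterate_succ_apply', ih, hm]

theorem stmt3 {K g : Type*} [Field K] [AddCommGroup g] [Module K g]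
    (b : g → g → g) (α : g → g) (h : IsHomLie K b α) (n : ℕ) :
    IsHomLie K (fun x y => α^[n] (b x y)) (α^[n+1]) := by
  obtain ⟨⟨hbl, hbr⟩, hα, hskew, hmult, hjac⟩ := h
  have hin := iter_linear hα n
  have him := iter_mult (K := K) hmult
  refine ⟨⟨fun x => ⟨fun a c => ?_, fun c a => ?_⟩, fun y => ⟨fun a c => ?_, fun c a => ?_⟩⟩,
    iter_linear hα (n+1), fun x y => ?_, fun x y => ?_, fun x y z => ?_⟩
  · dsimp only; rw [(hbl x).map_add, hin.map_add]
  · dsimp only; rw [(hbl x).map_smul, hin.map_smul]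
  · dsimp only; rw [(hbr y).map_add, hin.map_add]
  · dsimp only; rw [(hbr y).map_smul, hin.map_smul]
  · dsimp only; rw [hskew, hin.map_neg]
  · dsimp only
    calc α^[n+1] (α^[n] (b x y))
        = α^[n] (α^[n+1] (b x y)) := by
          rw [← Function.iterate_add_apply, ← Function.iterate_add_apply, Nat.add_comm]
      _ = α^[n] (b (α^[n+1] x) (α^[n+1] y)) := by rw [him (n+1)]
  · dsimp only
    have key : ∀ u v w : g,
        α^[n] (b (α^[n] (b u v)) (α^[n+1] w)) = α^[n] (α^[n] (b (b u v) (α w))) := by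
      intro u v w
      rw [him n (b u v) (α w), Function.iterate_succ_apply]
    rw [key, key, key, ← hin.map_add, ← hin.map_add, ← hin.map_add, ← hin.map_add, hjac,
      hin.map_zero, hin.map_zero]
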